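/- Let F_q be a finite field of odd characteristic, d ≥ 4 even, χ a nontrivial additive character, and S_0 = {m ∈ F_q^d : m₁²+⋯+m_d² = 0}. If x ∈ F_q^d satisfies ‖x‖ = x₁²+⋯+x_d² ≠ 0, then |Σ_{m∈S_0} χ(-x·m)| = q^{(d-2)/2}. -/

import Mathlib

open Finset

section Aux
variable {F : Type*} [Field F] [Fintype F] [DecidableEq F]

private lemma addChar_map_sum (χ : AddChar F ℂ) {ι : Type*} (s : Finset ι) (f : ι → F) :
    χ (∑ i ∈ s, f i) = ∏ i ∈ s, χ (f i) := by
  induction s using Finset.cons_induction with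
  | empty => simp
  | cons a s ha ih => simp [Finset.sum_cons, Finset.prod_cons, AddChar.map_add_eq_mul, ih]

private lemma eta_sq (hF : ringChar F ≠ 2) {b : F} (hb : b ≠ 0) :
    ((quadraticChar F).ringHomComp (Int.castRingHom ℂ)) b *
      ((quadraticChar F).ringHomComp (Int.castRingHom ℂ)) b = 1 := by
  set η := (quadraticChar F).ringHomComp (Int.castRingHom ℂ) with hη
  have h := ((quadraticChar_isQuadratic F).comp (Int.castRingHom ℂ)).sq_eq_one
  have h2 := MulChar.pow_apply' η two_ne_zero b
  rw [h, MulChar.one_apply (Ne.isUnit hb)] at h2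
  rw [← pow_two]
  exact h2.symm

/-- Sum of `χ (b * y ^ 2)` equals `η b * G`. -/
private lemma sum_sq_eq (hF : ringChar F ≠ 2) (χ : AddChar F ℂ) (hχ : χ ≠ 1)
    {b : F} (hb : b ≠ 0) :
    ∑ y : F, χ (b * y ^ 2) =
      ((quadraticChar F).ringHomComp (Int.castRingHom ℂ)) b *
        gaussSum ((quadraticChar F).ringHomComp (Int.castRingHom ℂ)) χ := by
  set η := (quadraticChar F).ringHomComp (Int.castRingHom ℂ) with hη
  have hprim : χ.IsPrimitive := AddChar.IsPrimitive.of_ne_one hχ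
  have card_eq : ∀ a : F, ((univ.filter (fun y : F => y ^ 2 = a)).card : ℂ)
      = ((quadraticChar F a : ℤ) : ℂ) + 1 := by
    intro a
    have h := quadraticChar_card_sqrts hF a
    rw [Set.toFinset_setOf] at h
    exact_mod_cast congrArg (fun n : ℤ => (n : ℂ)) h
  have step1 : ∑ y : F, χ (b * y ^ 2)
      = ∑ a : F, ∑ y ∈ univ.filter (fun y : F => y ^ 2 = a), χ (b * a) := by
    rw [← Finset.sum_fiberwise univ (fun y : F => y ^ 2) (fun y => χ (b * y ^ 2))]
    exact Finset.sum_congr rfl fun a _ => Finset.sum_congr rfl fun y hy => by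
      simp only [Finset.mem_filter] at hy
      rw [hy.2]
  have step2 : ∑ y : F, χ (b * y ^ 2)
      = ∑ a : F, η a * χ (b * a) + ∑ a : F, χ (b * a) := by
    rw [step1, ← Finset.sum_add_distrib]
    refine Finset.sum_congr rfl fun a _ => ?_
    rw [Finset.sum_const, nsmul_eq_mul, card_eq]
    have : η a = ((quadraticChar F a : ℤ) : ℂ) := rfl
    rw [this]; ring
  have step3 : ∑ a : F, χ (b * a) = 0 := by
    simp_rw [mul_comm b]
    rw [AddChar.sum_mulShift b hprim, if_neg hb]
    norm_num
  have step4 : ∑ a : F, η a * χ (b * a) = gaussSum η (AddChar.mulShift χ b) := by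
    simp [gaussSum, AddChar.mulShift_apply]
  have step5 : gaussSum η (AddChar.mulShift χ b) = η b * gaussSum η χ := by
    have h := gaussSum_mulShift η χ (Units.mk0 b hb)
    simp only [Units.val_mk0] at h
    have hsq := eta_sq hF hb
    calc gaussSum η (AddChar.mulShift χ b)
        = (η b * η b) * gaussSum η (AddChar.mulShift χ b) := by rw [hsq, one_mul]
      _ = η b * (η b * gaussSum η (AddChar.mulShift χ b)) := by rw [mul_assoc]
      _ = η b * gaussSum η χ := by rw [h]
  rw [step2, step3, step4, step5, add_zero]

/-- Completing the square: `∑ y, χ (t y² + c y) = χ (-(c²/(4t))) * η t * G`. -/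
private lemma sum_quad_eq (hF : ringChar F ≠ 2) (χ : AddChar F ℂ) (hχ : χ ≠ 1)
    {t : F} (ht : t ≠ 0) (c : F) :
    ∑ y : F, χ (t * y ^ 2 + c * y) =
      χ (-(c ^ 2 / (4 * t))) *
        (((quadraticChar F).ringHomComp (Int.castRingHom ℂ)) t *
          gaussSum ((quadraticChar F).ringHomComp (Int.castRingHom ℂ)) χ) := by
  have h2 : (2 : F) ≠ 0 := Ring.two_ne_zero hF
  have h4 : (4 : F) ≠ 0 := by
    have : (4 : F) = 2 * 2 := by norm_num
    rw [this]; exact mul_ne_zero h2 h2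
  have key : ∀ y : F, t * y ^ 2 + c * y
      = t * (y + c / (2 * t)) ^ 2 + -(c ^ 2 / (4 * t)) := by
    intro y
    field_simp
    ring
  calc ∑ y : F, χ (t * y ^ 2 + c * y)
      = ∑ y : F, χ (t * (y + c / (2 * t)) ^ 2) * χ (-(c ^ 2 / (4 * t))) := by
        refine Finset.sum_congr rfl fun y _ => ?_
        rw [key y, AddChar.map_add_eq_mul]
    _ = (∑ z : F, χ (t * z ^ 2)) * χ (-(c ^ 2 / (4 * t))) := by
        rw [← Finset.sum_mul]
        congr 1
        exact Fintype.sum_equiv (Equiv.addRight (c / (2 * t))) _ _ (fun y => rfl)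
    _ = χ (-(c ^ 2 / (4 * t))) *
        (((quadraticChar F).ringHomComp (Int.castRingHom ℂ)) t *
          gaussSum ((quadraticChar F).ringHomComp (Int.castRingHom ℂ)) χ) := by
        rw [sum_sq_eq hF χ hχ ht, mul_comm]

end Aux

/-- For `d ≥ 4` even and `x` with `‖x‖ = ∑ x_k² ≠ 0`, the Fourier transform of the
zero sphere has absolute value exactly `q^{(d-2)/2}`. -/
theorem fourier_zero_sphere_abs (F : Type*) [Field F] [Fintype F] [DecidableEq F]
    (hF : ringChar F ≠ 2) (χ : AddChar F ℂ) (hχ : χ ≠ 1)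
    (d : ℕ) (hd : 4 ≤ d) (hde : Even d) (x : Fin d → F) (hx : ∑ k, x k ^ 2 ≠ 0) :
    ‖∑ m ∈ Finset.univ.filter (fun m : Fin d → F => ∑ k, m k ^ 2 = 0),
        χ (-(∑ k, x k * m k))‖ = (Fintype.card F : ℝ) ^ ((d - 2) / 2) := by
  set η := (quadraticChar F).ringHomComp (Int.castRingHom ℂ) with hη
  set G := gaussSum η χ with hG
  set S := ∑ m ∈ Finset.univ.filter (fun m : Fin d → F => ∑ k, m k ^ 2 = 0),
      χ (-(∑ k, x k * m k)) with hSdef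
  have hprim : χ.IsPrimitive := AddChar.IsPrimitive.of_ne_one hχ
  have hη1 : η ≠ 1 :=
    (MulChar.ringHomComp_ne_one_iff (RingHom.injective_int _)).mpr (quadraticChar_ne_one hF)
  have hηq : η.IsQuadratic := (quadraticChar_isQuadratic F).comp _
  have hqC : ((Fintype.card F : ℂ)) ≠ 0 := Nat.cast_ne_zero.mpr Fintype.card_ne_zero
  have h4 : (4 : F) ≠ 0 := by
    have h2 : (2 : F) ≠ 0 := Ring.two_ne_zero hF
    have : (4 : F) = 2 * 2 := by norm_num
    rw [this]; exact mul_ne_zero h2 h2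
  set N := ∑ k, x k ^ 2 with hN
  -- the function of t
  set P : F → ℂ := fun t => ∏ k, ∑ y : F, χ (t * y ^ 2 + (-(x k)) * y) with hP
  have e2 : (Fintype.card F : ℂ) * S = ∑ t : F, P t := by
    have horth : ∀ b : F, ∑ t : F, χ (t * b) = if b = 0 then (Fintype.card F : ℂ) else 0 := by
      intro b
      have h := AddChar.sum_mulShift b hprim
      rw [h]
      push_cast
      rfl
    calc (Fintype.card F : ℂ) * S
        = ∑ m ∈ Finset.univ.filter (fun m : Fin d → F => ∑ k, m k ^ 2 = 0),
            (Fintype.card F : ℂ) * χ (-(∑ k, x k * m k)) := by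
          rw [hSdef, Finset.mul_sum]
      _ = ∑ m : Fin d → F, (if ∑ k, m k ^ 2 = 0 then (Fintype.card F : ℂ) else 0)
            * χ (-(∑ k, x k * m k)) := by
          rw [Finset.sum_filter]
          exact Finset.sum_congr rfl fun m _ => by split_ifs <;> simp
      _ = ∑ m : Fin d → F, ∑ t : F, χ (t * (∑ k, m k ^ 2)) * χ (-(∑ k, x k * m k)) := by
          refine Finset.sum_congr rfl fun m _ => ?_
          rw [← Finset.sum_mul, horth]
      _ = ∑ t : F, ∑ m : Fin d → F, χ (t * (∑ k, m k ^ 2)) * χ (-(∑ k, x k * m k)) :=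
          Finset.sum_comm
      _ = ∑ t : F, ∑ m : Fin d → F, ∏ k, χ (t * m k ^ 2 + (-(x k)) * m k) := by
          refine Finset.sum_congr rfl fun t _ => Finset.sum_congr rfl fun m _ => ?_
          rw [← AddChar.map_add_eq_mul, ← addChar_map_sum]
          congr 1
          rw [Finset.mul_sum, ← Finset.sum_neg_distrib, ← Finset.sum_add_distrib]
          exact Finset.sum_congr rfl fun k _ => by ring
      _ = ∑ t : F, P t := by
          refine Finset.sum_congr rfl fun t _ => ?_
          rw [hP]
          exact (Fintype.prod_sum fun k y => χ (t * y ^ 2 + (-(x k)) * y)).symm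
  have e3 : P 0 = 0 := by
    obtain ⟨k0, hk0⟩ : ∃ k, x k ≠ 0 := by
      by_contra h
      push_neg at h
      exact hx (Finset.sum_eq_zero fun k _ => by rw [h k]; ring)
    refine Finset.prod_eq_zero (Finset.mem_univ k0) ?_
    have : ∀ y : F, (0 : F) * y ^ 2 + (-(x k0)) * y = y * (-(x k0)) := fun y => by ring
    simp_rw [this]
    rw [AddChar.sum_mulShift _ hprim, if_neg (neg_ne_zero.mpr hk0)]
    exact Nat.cast_zero
  have e4 : ∀ t : F, t ≠ 0 → P t = χ (-(N / (4 * t))) * G ^ d := by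
    intro t ht
    have hηtd : (η t) ^ d = 1 := by
      obtain ⟨c, hc⟩ := hde
      have hd2 : d = 2 * c := by omega
      rw [hd2, pow_mul, pow_two, eta_sq hF ht, one_pow]
    calc P t = ∏ k, (χ (-((-(x k)) ^ 2 / (4 * t))) * (η t * G)) :=
          Finset.prod_congr rfl fun k _ => sum_quad_eq hF χ hχ ht (-(x k))
      _ = (∏ k, χ (-((x k) ^ 2 / (4 * t)))) * (η t * G) ^ d := by
          rw [Finset.prod_mul_distrib, Finset.prod_const, Finset.card_univ, Fintype.card_fin]
          congr 1
          exact Finset.prod_congr rfl fun k _ => by rw [neg_sq]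
      _ = χ (-(N / (4 * t))) * G ^ d := by
          rw [mul_pow, hηtd, one_mul]
          congr 1
          rw [← addChar_map_sum]
          congr 1
          rw [hN, Finset.sum_div, ← Finset.sum_neg_distrib]
  have e5 : ∑ t ∈ Finset.univ.erase (0 : F), χ (-(N / (4 * t))) = -1 := by
    have hbij : ∑ t ∈ Finset.univ.erase (0 : F), χ (-(N / (4 * t)))
        = ∑ s ∈ Finset.univ.erase (0 : F), χ s := by
      refine Finset.sum_nbij' (fun t => -(N / (4 * t))) (fun s => -(N / (4 * s)))
        ?_ ?_ ?_ ?_ ?_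
      · intro a ha
        rw [Finset.mem_erase] at ha ⊢
        refine ⟨neg_ne_zero.mpr (div_ne_zero hx (mul_ne_zero h4 ha.1)), Finset.mem_univ _⟩
      · intro a ha
        rw [Finset.mem_erase] at ha ⊢
        refine ⟨neg_ne_zero.mpr (div_ne_zero hx (mul_ne_zero h4 ha.1)), Finset.mem_univ _⟩
      · intro a ha
        rw [Finset.mem_erase] at ha
        field_simp
      · intro a ha
        rw [Finset.mem_erase] at ha
        field_simp
      · intro a _
        rfl
    rw [hbij]
    have h0 := AddChar.sum_eq_zero_of_ne_one hχ
    rw [← Finset.add_sum_erase Finset.univ χ (Finset.mem_univ (0 : F)),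
      AddChar.map_zero_eq_one] at h0
    linear_combination h0
  have key : (Fintype.card F : ℂ) * S = -G ^ d := by
    rw [e2, ← Finset.add_sum_erase Finset.univ P (Finset.mem_univ (0 : F)), e3, zero_add]
    have : ∑ t ∈ Finset.univ.erase (0 : F), P t
        = ∑ t ∈ Finset.univ.erase (0 : F), χ (-(N / (4 * t))) * G ^ d :=
      Finset.sum_congr rfl fun t ht => e4 t (Finset.mem_erase.mp ht).1
    rw [this, ← Finset.sum_mul, e5]
    ring
  -- now take absolute values
  have hScomp : S = -G ^ d / (Fintype.card F : ℂ) := by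
    rw [eq_div_iff hqC]
    linear_combination key
  have hG2 : G ^ 2 = η (-1) * (Fintype.card F : ℂ) := gaussSum_sq hη1 hηq hprim
  have habsη : ‖η (-1)‖ = 1 := by
    have hsq := eta_sq hF (show (-1 : F) ≠ 0 by simp)
    rcases hηq (-1) with h0 | h0 | h0
    · rw [h0, mul_zero] at hsq; exact absurd hsq.symm one_ne_zero
    · rw [h0]; simp
    · rw [h0]; simp
  have habsG : ‖G‖ ^ 2 = (Fintype.card F : ℝ) := by
    have h := congrArg norm hG2
    rw [norm_pow, norm_mul, habsη, one_mul, Complex.norm_natCast] at h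
    exact h
  have habsGd : ‖G‖ ^ d = (Fintype.card F : ℝ) ^ (d / 2) := by
    have h1 : ‖G‖ ^ d = (‖G‖ ^ 2) ^ (d / 2) := by
      rw [← pow_mul]
      congr 1
      obtain ⟨c, hc⟩ := hde
      omega
    rw [h1, habsG]
  have hqR : (0 : ℝ) < (Fintype.card F : ℝ) := by exact_mod_cast Fintype.card_pos
  rw [hScomp, norm_div, norm_neg, norm_pow, Complex.norm_natCast, habsGd]
  have hstep : d / 2 = (d - 2) / 2 + 1 := by omega
  rw [hstep, pow_succ, mul_div_assoc, div_self hqR.ne', mul_one]
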